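/- For the finite bag (multiset) functor B on the category of types (B X = Multiset X, with B acting on functions by Multiset.map), a function s : X → Multiset Y is B-precise if and only if for every y : Y there is exactly one x : X with y ∈ s x, and for this x the multiplicity of y in s x equals 1 (equivalently, the total count of y across all s x is exactly 1). -/
import Mathlib

universe u

/-- A function `s : S → Multiset R` is precise for the bag functor
(`B X = Multiset X`, acting on functions by `Multiset.map`) if whenever
`Multiset.map h ∘ f = Multiset.map g ∘ s` there is `d : R → C` with
`Multiset.map d ∘ s = f` and `h ∘ d = g`. -/
def BagPrecise {S R : Type u} (s : S → Multiset R) : Prop :=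
  ∀ {C D : Type u} (f : S → Multiset C) (g : R → D) (h : C → D),
    (fun x => (f x).map h) = (fun x => (s x).map g) →
    ∃ d : R → C, (fun x => (s x).map d) = f ∧ h ∘ d = g

theorem rel_exists_fun {Y C : Type u} [DecidableEq Y] (c₀ : C)
    {r : C → Y → Prop} (n : Multiset Y) :
    ∀ m : Multiset C, n.Nodup → Multiset.Rel r m n →
      ∃ d : Y → C, m = n.map d ∧ ∀ y ∈ n, r (d y) y := by
  induction n using Multiset.induction_on with
  | empty =>
    intro m _ hrel
    refine ⟨fun _ => c₀, ?_, by simp⟩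
    simpa using Multiset.rel_zero_right.1 hrel
  | cons y n ih =>
    intro m hnd hrel
    obtain ⟨c, m', hcy, hrel', rfl⟩ := Multiset.rel_cons_right.1 hrel
    obtain ⟨hy, hnd'⟩ := Multiset.nodup_cons.1 hnd
    obtain ⟨d', hd1, hd2⟩ := ih m' hnd' hrel'
    refine ⟨Function.update d' y c, ?_, ?_⟩
    · rw [Multiset.map_cons, Function.update_self, hd1]
      congr 1
      exact Multiset.map_congr rfl fun z hz =>
        (Function.update_of_ne (by rintro rfl; exact hy hz) _ _).symm
    · intro z hz
      rcases Multiset.mem_cons.1 hz with rfl | hz'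
      · simpa using hcy
      · rw [Function.update_of_ne (by rintro rfl; exact hy hz')]
        exact hd2 z hz'

/-- A function `s : X → Multiset Y` is precise for the bag functor iff for every
`y : Y` there is exactly one `x : X` with `y ∈ s x`, and for every such `x` the
multiplicity of `y` in `s x` equals `1`. -/
theorem bagPrecise_iff {X Y : Type u} [DecidableEq Y] (s : X → Multiset Y) :
    BagPrecise s ↔
      ∀ y : Y, (∃! x : X, y ∈ s x) ∧ ∀ x : X, y ∈ s x → (s x).count y = 1 := by
  classical
  constructor
  · intro hp y₀
    -- existence
    have hex : ∃ x, y₀ ∈ s x := by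
      have hstep := hp (C := {y : Y // ∃ x, y ∈ s x}) (D := Y)
        (fun x => (s x).attach.map (fun z => ⟨z.1, x, z.2⟩)) id Subtype.val
        (by
          funext x
          rw [Multiset.map_map, Multiset.map_id]
          exact Multiset.attach_map_val (s x))
      obtain ⟨d, hd1, hd2⟩ := hstep
      have h1 : (d y₀).1 = y₀ := congrFun hd2 y₀
      obtain ⟨x, hx⟩ := (d y₀).2
      exact ⟨x, h1 ▸ hx⟩
    -- uniqueness
    have huniq : ∀ x₁ x₂, y₀ ∈ s x₁ → y₀ ∈ s x₂ → x₁ = x₂ := by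
      intro x₁ x₂ h1 h2
      obtain ⟨d, hd1, hd2⟩ := hp (C := Y × X) (D := Y)
        (fun x => (s x).map (fun z => (z, x))) id Prod.fst
        (by funext x; simp [Multiset.map_map, Function.comp])
      have key : ∀ x, y₀ ∈ s x → (d y₀).2 = x := by
        intro x hx
        have hmem : d y₀ ∈ (s x).map d := Multiset.mem_map_of_mem d hx
        rw [congrFun hd1 x] at hmem
        obtain ⟨z, hz, hzz⟩ := Multiset.mem_map.1 hmem
        rw [← hzz]
      rw [← key x₁ h1, key x₂ h2]
    -- count
    have hcount : ∀ x, y₀ ∈ s x → (s x).count y₀ = 1 := by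
      intro x₀ hx₀
      obtain ⟨d, hd1, hd2⟩ := hp (C := Y × ULift.{u} Bool) (D := Y)
        (fun x => if x = x₀ then
            (y₀, ⟨true⟩) ::ₘ ((s x₀).erase y₀).map (fun z => (z, ⟨false⟩))
          else (s x).map (fun z => (z, ⟨false⟩))) id Prod.fst
        (by
          funext x
          by_cases hx : x = x₀
          · subst hx
            simp [Multiset.map_map, Function.comp, Multiset.cons_erase hx₀]
          · simp [hx, Multiset.map_map, Function.comp])
      have hfst : ∀ z, (d z).1 = z := fun z => congrFun hd2 z
      have heq := congrFun hd1 x₀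
      rw [if_pos rfl] at heq
      have hc := congrArg (Multiset.count ((y₀, (⟨true⟩ : ULift Bool)))) heq
      rw [Multiset.count_cons_self] at hc
      have hz0 : Multiset.count ((y₀, (⟨true⟩ : ULift Bool)))
          (((s x₀).erase y₀).map (fun z => (z, (⟨false⟩ : ULift Bool)))) = 0 := by
        rw [Multiset.count_eq_zero]
        intro hmem
        obtain ⟨z, _, hzz⟩ := Multiset.mem_map.1 hmem
        simpa using congrArg Prod.snd hzz
      rw [hz0] at hc
      by_cases hb : (d y₀).2 = ⟨true⟩
      · have hdy : d y₀ = (y₀, ⟨true⟩) := by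
          ext
          · exact hfst y₀
          · exact congrArg ULift.down hb
        rw [Multiset.count_map] at hc
        have : Multiset.filter (fun a => (y₀, (⟨true⟩ : ULift Bool)) = d a) (s x₀)
            = Multiset.filter (fun a => a = y₀) (s x₀) := by
          apply Multiset.filter_congr
          intro z _
          constructor
          · intro hz
            have := congrArg Prod.fst hz
            simp only at this
            rw [hfst z] at this
            exact this.symm
          · rintro rfl
            exact hdy.symm
        rw [this] at hc
        rw [Multiset.count_eq_card_filter_eq]
        rw [show Multiset.filter (fun b => y₀ = b) (s x₀)
            = Multiset.filter (fun a => a = y₀) (s x₀) from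
          Multiset.filter_congr fun z _ => eq_comm]
        exact hc.trans (Nat.zero_add 1)
      · exfalso
        rw [Multiset.count_map] at hc
        have : Multiset.filter (fun a => (y₀, (⟨true⟩ : ULift Bool)) = d a) (s x₀) = 0 := by
          rw [Multiset.filter_eq_nil]
          intro z _ hz
          apply hb
          have h1 := congrArg Prod.fst hz
          simp only at h1
          rw [hfst z] at h1
          subst h1
          exact (congrArg Prod.snd hz).symm
        rw [this] at hc
        simp at hc
    obtain ⟨x, hx⟩ := hex
    exact ⟨⟨x, hx, fun x' hx' => huniq x' x hx' hx⟩, hcount⟩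
  · intro hcond
    intro C D f g h heq
    have hrel : ∀ x, Multiset.Rel (fun c y => h c = g y) (f x) (s x) := by
      intro x
      have hx := congrFun heq x
      rw [← Multiset.rel_eq] at hx
      rwa [Multiset.rel_map] at hx
    have hnd : ∀ x, (s x).Nodup := fun x =>
      Multiset.nodup_iff_count_le_one.2 fun y => by
        by_cases hy : y ∈ s x
        · exact le_of_eq ((hcond y).2 x hy)
        · simp [Multiset.count_eq_zero_of_notMem hy]
    by_cases hC : Nonempty C
    · obtain ⟨c₀⟩ := hC
      choose dd hdd1 hdd2 using fun x => rel_exists_fun c₀ (s x) (f x) (hnd x) (hrel x)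
      refine ⟨fun y => dd ((hcond y).1.choose) y, ?_, ?_⟩
      · funext x
        rw [hdd1 x]
        exact (Multiset.map_congr rfl fun y hy => by
          rw [← (hcond y).1.choose_spec.2 x hy]).symm
      · funext y
        exact hdd2 ((hcond y).1.choose) y (hcond y).1.choose_spec.1
    · have hf0 : ∀ x, f x = 0 := by
        intro x
        rw [Multiset.eq_zero_iff_forall_notMem]
        intro c _
        exact hC ⟨c⟩
      have hs0 : ∀ x, s x = 0 := by
        intro x
        have hx := congrFun heq x
        rw [hf0 x] at hx
        simpa using hx.symm
      refine ⟨fun y => absurd ((hcond y).1.choose_spec.1) (by simp [hs0]), ?_, ?_⟩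
      · funext x
        rw [hs0 x, hf0 x]
        simp
      · funext y
        exact absurd ((hcond y).1.choose_spec.1) (by simp [hs0])
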